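/- arXiv:1810.03150 — 4 statements merged into one kernel-verified Lean document; each statement's English description precedes it below -/
import Mathlib

section
/- Let N be a quantum channel on d×d complex matrices, γ a positive-definite density matrix with N(γ) positive definite, and R_γ the Petz recovery map. For unit vectors ψ and φ', define the forward transition probability T(ψ→φ') = ⟨φ'| N(|ψ⟩⟨ψ|) |φ'⟩, the rescaled unit vectors ψ̃ = γ^{-1/2}ψ / ⟨ψ|γ^{-1}|ψ⟩^{1/2} and φ̃' = N(γ)^{1/2}φ' / ⟨φ'|N(γ)|φ'⟩^{1/2}, and the backward transition probability T̃(ψ̃←φ̃') = ⟨ψ̃| R_γ(|φ̃'⟩⟨φ̃'|) |ψ̃⟩. Then T(ψ→φ') = T̃(ψ̃←φ̃') · ⟨ψ|γ^{-1}|ψ⟩ · ⟨φ'|N(γ)|φ'⟩. -/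
open Matrix
open scoped ComplexOrder

/-- ⟨v|A|w⟩ -/
noncomputable def braket {d : ℕ} (v : Fin d → ℂ) (A : Matrix (Fin d) (Fin d) ℂ)
    (w : Fin d → ℂ) : ℂ :=
  dotProduct (star v) (A.mulVec w)

/-- |v⟩⟨w| -/
noncomputable def ketbra {d : ℕ} (v w : Fin d → ℂ) : Matrix (Fin d) (Fin d) ℂ :=
  Matrix.vecMulVec v (star w)

/-- A quantum channel in Kraus form: N(X) = ∑ m, K m * X * (K m)ᴴ. -/
noncomputable def krausMap {d : ℕ} {ι : Type} [Fintype ι] (K : ι → Matrix (Fin d) (Fin d) ℂ)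
    (X : Matrix (Fin d) (Fin d) ℂ) : Matrix (Fin d) (Fin d) ℂ :=
  ∑ m, K m * X * (K m)ᴴ

/-- The adjoint map: N†(X) = ∑ m, (K m)ᴴ * X * K m. -/
noncomputable def krausAdj {d : ℕ} {ι : Type} [Fintype ι] (K : ι → Matrix (Fin d) (Fin d) ℂ)
    (X : Matrix (Fin d) (Fin d) ℂ) : Matrix (Fin d) (Fin d) ℂ :=
  ∑ m, (K m)ᴴ * X * K m

/-- Functional calculus of a Hermitian matrix, via its spectral decomposition
(junk value `0` on non-Hermitian matrices). -/
noncomputable def mfun {n : Type} [Fintype n] [DecidableEq n] (f : ℝ → ℂ)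
    (M : Matrix n n ℂ) : Matrix n n ℂ :=
  if h : M.IsHermitian then
    (h.eigenvectorUnitary : Matrix n n ℂ) *
      Matrix.diagonal (fun i => f (h.eigenvalues i)) *
      star (h.eigenvectorUnitary : Matrix n n ℂ)
  else 0

/-- Complex matrix power A^z = exp (z log A) of a positive-definite matrix,
defined via its spectral decomposition. -/
noncomputable def mpow {n : Type} [Fintype n] [DecidableEq n]
    (M : Matrix n n ℂ) (z : ℂ) : Matrix n n ℂ :=
  mfun (fun r => (r : ℂ) ^ z) M

/-- The Petz recovery map R_γ(X) = γ^{1/2} N†(N(γ)^{-1/2} X N(γ)^{-1/2}) γ^{1/2}. -/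
noncomputable def petz {d : ℕ} {ι : Type} [Fintype ι] (K : ι → Matrix (Fin d) (Fin d) ℂ)
    (γ : Matrix (Fin d) (Fin d) ℂ) (X : Matrix (Fin d) (Fin d) ℂ) :
    Matrix (Fin d) (Fin d) ℂ :=
  mpow γ (1/2) * krausAdj K (mpow (krausMap K γ) (-(1/2)) * X * mpow (krausMap K γ) (-(1/2))) *
    mpow γ (1/2)

/-- The reference-rescaled initial state ψ̃ = γ^{-1/2} ψ / ⟨ψ|γ⁻¹|ψ⟩^{1/2}. -/
noncomputable def rescaleIn {d : ℕ} (γ : Matrix (Fin d) (Fin d) ℂ) (ψ : Fin d → ℂ) :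
    Fin d → ℂ :=
  (braket ψ (mpow γ (-1)) ψ) ^ (-(1/2) : ℂ) • (mpow γ (-(1/2))).mulVec ψ

/-- The reference-rescaled final state φ̃' = N(γ)^{1/2} φ' / ⟨φ'|N(γ)|φ'⟩^{1/2}. -/
noncomputable def rescaleOut {d : ℕ} {ι : Type} [Fintype ι] (K : ι → Matrix (Fin d) (Fin d) ℂ)
    (γ : Matrix (Fin d) (Fin d) ℂ) (φ : Fin d → ℂ) : Fin d → ℂ :=
  (braket φ (krausMap K γ) φ) ^ (-(1/2) : ℂ) • (mpow (krausMap K γ) (1/2)).mulVec φ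

section mylemmas

namespace PetzAux
open Matrix
open scoped ComplexOrder

variable {n : Type} [Fintype n] [DecidableEq n] {M : Matrix n n ℂ}

lemma mfun_mul (h : M.IsHermitian) (f g : ℝ → ℂ) :
    mfun f M * mfun g M = mfun (fun r => f r * g r) M := by
  simp only [mfun, dif_pos h]
  set U : Matrix n n ℂ := (h.eigenvectorUnitary : Matrix n n ℂ) with hUdef
  have hU : star U * U = 1 := Unitary.coe_star_mul_self _
  have key : U * Matrix.diagonal (fun i => f (h.eigenvalues i)) * star U *
      (U * Matrix.diagonal (fun i => g (h.eigenvalues i)) * star U)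
      = U * (Matrix.diagonal (fun i => f (h.eigenvalues i)) * ((star U * U) *
        Matrix.diagonal (fun i => g (h.eigenvalues i)))) * star U := by
    simp only [Matrix.mul_assoc]
  rw [key, hU, Matrix.one_mul, Matrix.diagonal_mul_diagonal]

lemma mfun_congr (h : M.IsHermitian) {f g : ℝ → ℂ}
    (hfg : ∀ i, f (h.eigenvalues i) = g (h.eigenvalues i)) : mfun f M = mfun g M := by
  simp only [mfun, dif_pos h]
  rw [show (fun i => f (h.eigenvalues i)) = (fun i => g (h.eigenvalues i)) from funext hfg]

lemma mfun_isHermitian (h : M.IsHermitian) {f : ℝ → ℂ}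
    (hf : ∀ i, star (f (h.eigenvalues i)) = f (h.eigenvalues i)) :
    (mfun f M).IsHermitian := by
  simp only [mfun, dif_pos h]
  show _ᴴ = _
  simp only [Matrix.star_eq_conjTranspose, conjTranspose_mul,
    Matrix.conjTranspose_conjTranspose, Matrix.diagonal_conjTranspose,
    Matrix.mul_assoc, Pi.star_def]
  rw [show (fun i => star (f (h.eigenvalues i))) = (fun i => f (h.eigenvalues i)) from
    funext hf]

lemma mpow_add (hM : M.PosDef) (z w : ℂ) : mpow M z * mpow M w = mpow M (z + w) := by
  rw [mpow, mpow, mpow, mfun_mul hM.1]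
  refine mfun_congr hM.1 fun i => ?_
  have hpos := hM.eigenvalues_pos i
  exact (Complex.cpow_add _ _ (by exact_mod_cast hpos.ne')).symm

lemma mpow_zero (h : M.IsHermitian) : mpow M 0 = 1 := by
  simp only [mpow, mfun, dif_pos h, Complex.cpow_zero]
  rw [Matrix.diagonal_one, Matrix.mul_one]
  exact Unitary.coe_mul_star_self _

lemma mpow_isHermitian_real (hM : M.PosDef) (z : ℝ) : (mpow M (z : ℂ)).IsHermitian := by
  refine mfun_isHermitian hM.1 fun i => ?_
  have hpos := hM.eigenvalues_pos i
  rw [← Complex.ofReal_cpow hpos.le]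
  exact Complex.conj_ofReal _

lemma mpow_half_isHermitian (hM : M.PosDef) : (mpow M (1/2)).IsHermitian := by
  have := mpow_isHermitian_real hM (1/2)
  rwa [show (((1:ℝ)/2 : ℝ) : ℂ) = (1/2 : ℂ) by norm_num] at this

lemma mpow_neg_half_isHermitian (hM : M.PosDef) : (mpow M (-(1/2))).IsHermitian := by
  have := mpow_isHermitian_real hM (-(1/2))
  rwa [show ((-(1/2) : ℝ) : ℂ) = (-(1/2) : ℂ) by norm_num] at this

lemma mpow_half_mul_neg_half (hM : M.PosDef) : mpow M (1/2) * mpow M (-(1/2)) = 1 := by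
  rw [mpow_add hM, show (1/2 + -(1/2) : ℂ) = 0 by ring, mpow_zero hM.1]

lemma mpow_neg_half_mul_half (hM : M.PosDef) : mpow M (-(1/2)) * mpow M (1/2) = 1 := by
  rw [mpow_add hM, show (-(1/2) + 1/2 : ℂ) = 0 by ring, mpow_zero hM.1]

lemma mpow_neg_half_sq (hM : M.PosDef) :
    mpow M (-(1/2)) * mpow M (-(1/2)) = mpow M (-1) := by
  rw [mpow_add hM, show (-(1/2) + -(1/2) : ℂ) = -1 by ring]

lemma scalar_key {t : ℝ} (ht : 0 < t) :
    star ((t : ℂ) ^ (-(1/2) : ℂ)) * ((t : ℂ) ^ (-(1/2) : ℂ)) = ((t : ℂ))⁻¹ := by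
  have h1 : ((t : ℂ)) ^ (-(1/2) : ℂ) = ((t ^ (-(1/2) : ℝ) : ℝ) : ℂ) := by
    rw [Complex.ofReal_cpow ht.le]; norm_num
  rw [h1, Complex.star_def, Complex.conj_ofReal, ← Complex.ofReal_mul,
    ← Real.rpow_add ht, show (-(1/2) + -(1/2) : ℝ) = -1 by ring,
    Real.rpow_neg_one, Complex.ofReal_inv]

variable {d : ℕ}

lemma mul_vecMulVec (M : Matrix n n ℂ) (v w : n → ℂ) :
    M * vecMulVec v w = vecMulVec (M *ᵥ v) w := by
  ext i j
  simp only [Matrix.mul_apply, vecMulVec_apply, Matrix.mulVec, dotProduct,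
    Finset.sum_mul]
  exact Finset.sum_congr rfl fun k _ => by ring

lemma vecMulVec_mul (v w : n → ℂ) (M : Matrix n n ℂ) :
    vecMulVec v w * M = vecMulVec v (w ᵥ* M) := by
  ext i j
  simp only [Matrix.mul_apply, vecMulVec_apply, Matrix.vecMul, dotProduct,
    Finset.mul_sum]
  exact Finset.sum_congr rfl fun k _ => by ring

lemma sum_mulVec {ι : Type} [Fintype ι] (M : ι → Matrix n n ℂ) (v : n → ℂ) :
    (∑ m, M m) *ᵥ v = ∑ m, M m *ᵥ v := by
  ext i
  simp only [Matrix.mulVec, dotProduct, Matrix.sum_apply, Finset.sum_apply,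
    Finset.sum_mul]
  exact Finset.sum_comm

lemma dot_sum (v : n → ℂ) {ι : Type} [Fintype ι] (w : ι → n → ℂ) :
    v ⬝ᵥ (∑ m, w m) = ∑ m, v ⬝ᵥ w m := by
  simp only [dotProduct, Finset.sum_apply, Finset.mul_sum]
  exact Finset.sum_comm

lemma dot_ketbra (v p q w : Fin d → ℂ) :
    star v ⬝ᵥ (ketbra p q *ᵥ w) = (star v ⬝ᵥ p) * (star q ⬝ᵥ w) := by
  simp only [ketbra, Matrix.mulVec, dotProduct, vecMulVec_apply, Finset.mul_sum,
    Finset.sum_mul]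
  rw [Finset.sum_comm]
  refine Finset.sum_congr rfl fun j _ => Finset.sum_congr rfl fun i _ => by ring

lemma ketbra_smul (c : ℂ) (v : Fin d → ℂ) :
    ketbra (c • v) (c • v) = (c * star c) • ketbra v v := by
  ext i j
  simp only [ketbra, vecMulVec_apply, Pi.smul_apply, smul_eq_mul, Pi.star_apply,
    star_mul', Matrix.smul_apply]
  ring

lemma petz_smul {ι : Type} [Fintype ι] (K : ι → Matrix (Fin d) (Fin d) ℂ)
    (γ : Matrix (Fin d) (Fin d) ℂ) (c : ℂ) (X : Matrix (Fin d) (Fin d) ℂ) :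
    petz K γ (c • X) = c • petz K γ X := by
  simp only [petz, krausAdj, Matrix.mul_smul, Matrix.smul_mul, ← Finset.smul_sum]

lemma braket_smul_mat (v : Fin d → ℂ) (c : ℂ) (M : Matrix (Fin d) (Fin d) ℂ)
    (w : Fin d → ℂ) : braket v (c • M) w = c * braket v M w := by
  simp only [braket, Matrix.smul_mulVec, dotProduct_smul, smul_eq_mul]

lemma braket_smul_vec (c : ℂ) (v : Fin d → ℂ) (M : Matrix (Fin d) (Fin d) ℂ) :
    braket (c • v) M (c • v) = (star c * c) * braket v M v := by
  simp only [braket, star_smul, smul_dotProduct, Matrix.mulVec_smul,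
    dotProduct_smul, smul_eq_mul]
  ring

end PetzAux
end mylemmas

/-- detailed balance condition for pure states,
T(ψ→φ') = T̃(ψ̃←φ̃') ⟨ψ|γ⁻¹|ψ⟩ ⟨φ'|N(γ)|φ'⟩. -/
theorem pure_state_detailed_balance
    {d : ℕ} {ι : Type} [Fintype ι] (K : ι → Matrix (Fin d) (Fin d) ℂ)
    (hK : ∑ m, (K m)ᴴ * K m = 1)
    (γ : Matrix (Fin d) (Fin d) ℂ) (hγ : γ.PosDef) (hγtr : γ.trace = 1)
    (hNγ : (krausMap K γ).PosDef)
    (ψ φ : Fin d → ℂ) (hψ : dotProduct (star ψ) ψ = 1)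
    (hφ : dotProduct (star φ) φ = 1) :
    braket φ (krausMap K (ketbra ψ ψ)) φ =
      braket (rescaleIn γ ψ) (petz K γ (ketbra (rescaleOut K γ φ) (rescaleOut K γ φ)))
          (rescaleIn γ ψ) *
        braket ψ (mpow γ (-1)) ψ * braket φ (krausMap K γ) φ := by
  classical
  have hψ0 : ψ ≠ 0 := by
    intro h; rw [h] at hψ; simp [dotProduct] at hψ
  have hφ0 : φ ≠ 0 := by
    intro h; rw [h] at hφ; simp [dotProduct] at hφ
  have hγh := PetzAux.mpow_half_isHermitian hγ
  have hγnh := PetzAux.mpow_neg_half_isHermitian hγ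
  have hNnh := PetzAux.mpow_neg_half_isHermitian hNγ
  set x : Fin d → ℂ := (mpow γ (-(1/2))) *ᵥ ψ with hxdef
  set y : Fin d → ℂ := (mpow (krausMap K γ) (1/2)) *ᵥ φ with hydef
  have hγx : (mpow γ (1/2)) *ᵥ x = ψ := by
    rw [hxdef, Matrix.mulVec_mulVec, PetzAux.mpow_half_mul_neg_half hγ, Matrix.one_mulVec]
  have hNy : (mpow (krausMap K γ) (-(1/2))) *ᵥ y = φ := by
    rw [hydef, Matrix.mulVec_mulVec, PetzAux.mpow_neg_half_mul_half hNγ, Matrix.one_mulVec]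
  have hxstar : star x ᵥ* (mpow γ (1/2)) = star ψ := by
    have h := congrArg star hγx
    rw [Matrix.star_mulVec, hγh.eq] at h
    exact h
  have hystar : star y ᵥ* (mpow (krausMap K γ) (-(1/2))) = star φ := by
    have h := congrArg star hNy
    rw [Matrix.star_mulVec, hNnh.eq] at h
    exact h
  have hx0 : x ≠ 0 := fun h => hψ0 (by rw [← hγx, h, Matrix.mulVec_zero])
  have hxa : star ψ ⬝ᵥ (mpow γ (-1)) *ᵥ ψ = star x ⬝ᵥ x := by
    rw [← PetzAux.mpow_neg_half_sq hγ, ← Matrix.mulVec_mulVec, Matrix.dotProduct_mulVec,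
      hxdef, Matrix.star_mulVec, hγnh.eq]
  set ta : ℝ := ∑ i, Complex.normSq (x i) with htadef
  have hta : 0 < ta := by
    obtain ⟨i, hi⟩ := Function.ne_iff.mp hx0
    exact Finset.sum_pos' (fun j _ => Complex.normSq_nonneg _)
      ⟨i, Finset.mem_univ i, Complex.normSq_pos.mpr hi⟩
  have ha : braket ψ (mpow γ (-1)) ψ = ((ta : ℝ) : ℂ) := by
    unfold braket
    rw [hxa, htadef, dotProduct]
    push_cast
    refine Finset.sum_congr rfl fun i _ => ?_
    rw [Pi.star_apply, Complex.star_def, mul_comm, Complex.mul_conj]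
  have hb : (0:ℂ) < braket φ (krausMap K γ) φ := hNγ.dotProduct_mulVec_pos hφ0
  set tb : ℝ := (braket φ (krausMap K γ) φ).re with htbdef
  have htb : 0 < tb := by simpa using (Complex.lt_def.mp hb).1
  have hbim : (braket φ (krausMap K γ) φ).im = 0 := by
    simpa using ((Complex.lt_def.mp hb).2).symm
  have hbeq : braket φ (krausMap K γ) φ = ((tb : ℝ) : ℂ) := by
    apply Complex.ext
    · simp [htbdef]
    · simp [hbim]
  have hsand : mpow (krausMap K γ) (-(1/2)) * ketbra y y * mpow (krausMap K γ) (-(1/2))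
      = ketbra φ φ := by
    unfold ketbra
    rw [PetzAux.mul_vecMulVec, PetzAux.vecMulVec_mul, hNy, hystar]
  have hcore : braket x (petz K γ (ketbra y y)) x
      = braket ψ (krausAdj K (ketbra φ φ)) ψ := by
    unfold petz
    rw [hsand]
    unfold braket
    rw [← Matrix.mulVec_mulVec, hγx, ← Matrix.mulVec_mulVec, Matrix.dotProduct_mulVec,
      hxstar]
  have hswap : braket ψ (krausAdj K (ketbra φ φ)) ψ
      = braket φ (krausMap K (ketbra ψ ψ)) φ := by
    unfold braket krausAdj krausMap
    rw [PetzAux.sum_mulVec, PetzAux.dot_sum, PetzAux.sum_mulVec, PetzAux.dot_sum]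
    refine Finset.sum_congr rfl fun m _ => ?_
    have e1 : (K m)ᴴ * ketbra φ φ * K m = ketbra ((K m)ᴴ *ᵥ φ) ((K m)ᴴ *ᵥ φ) := by
      unfold ketbra
      rw [PetzAux.mul_vecMulVec, PetzAux.vecMulVec_mul,
        show star φ ᵥ* K m = star ((K m)ᴴ *ᵥ φ) by
          rw [Matrix.star_mulVec, Matrix.conjTranspose_conjTranspose]]
    have e2 : K m * ketbra ψ ψ * (K m)ᴴ = ketbra (K m *ᵥ ψ) (K m *ᵥ ψ) := by
      unfold ketbra
      rw [PetzAux.mul_vecMulVec, PetzAux.vecMulVec_mul, ← Matrix.star_mulVec]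
    rw [e1, e2, PetzAux.dot_ketbra, PetzAux.dot_ketbra]
    rw [show star ψ ⬝ᵥ ((K m)ᴴ *ᵥ φ) = star (K m *ᵥ ψ) ⬝ᵥ φ by
        rw [Matrix.dotProduct_mulVec, ← Matrix.star_mulVec],
      show star ((K m)ᴴ *ᵥ φ) ⬝ᵥ ψ = star φ ⬝ᵥ (K m *ᵥ ψ) by
        rw [Matrix.star_mulVec, Matrix.conjTranspose_conjTranspose,
          ← Matrix.dotProduct_mulVec]]
    ring
  unfold rescaleIn rescaleOut
  rw [← hxdef, ← hydef, ha, hbeq]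
  rw [PetzAux.ketbra_smul, PetzAux.petz_smul, PetzAux.braket_smul_vec,
    PetzAux.braket_smul_mat, hcore, hswap]
  rw [PetzAux.scalar_key hta, mul_comm ((tb:ℂ) ^ (-(1/2):ℂ)) (star ((tb:ℂ) ^ (-(1/2):ℂ))),
    PetzAux.scalar_key htb]
  have hta0 : ((ta : ℝ) : ℂ) ≠ 0 := Complex.ofReal_ne_zero.mpr hta.ne'
  have htb0 : ((tb : ℝ) : ℂ) ≠ 0 := Complex.ofReal_ne_zero.mpr htb.ne'
  field_simp
end

section
/- Let H be a Hermitian d×d complex matrix, β > 0, and ψ, φ' unit vectors in ℂ^d. Set ΔE = ⟨φ'|H|φ'⟩ − ⟨ψ|H|ψ⟩ and Υ = e^{βΔE} · ⟨ψ| exp(βH) |ψ⟩ · ⟨φ'| exp(−βH) |φ'⟩. Then Υ ≥ 1, and Υ = 1 if and only if both ψ and φ' are eigenvectors of H (i.e., neither state contains coherence in the energy eigenbasis). -/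
open Matrix
open scoped ComplexOrder

/-- Jensen-type inequality for `exp` with equality case, proved via `1 + t ≤ exp t`. -/
lemma qcf_jensen {d : ℕ} (a t : Fin d → ℝ) (ha : ∀ i, 0 ≤ a i) (hsum : ∑ i, a i = 1)
    (hmean : ∑ i, a i * t i = 0) :
    1 ≤ ∑ i, a i * Real.exp (t i) ∧
      ((∑ i, a i * Real.exp (t i)) = 1 ↔ ∀ i, a i ≠ 0 → t i = 0) := by
  have key : ∀ i ∈ Finset.univ, (0:ℝ) ≤ a i * (Real.exp (t i) - 1 - t i) := fun i _ =>
    mul_nonneg (ha i) (by nlinarith [Real.add_one_le_exp (t i)])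
  have hsplit : ∑ i, a i * (Real.exp (t i) - 1 - t i)
      = (∑ i, a i * Real.exp (t i)) - 1 := by
    have h : ∀ i, a i * (Real.exp (t i) - 1 - t i)
        = a i * Real.exp (t i) - a i - a i * t i := fun i => by ring
    simp_rw [h, Finset.sum_sub_distrib, hsum, hmean]; ring
  have hnn := Finset.sum_nonneg key
  refine ⟨by linarith, ⟨fun h1 => ?_, fun h => ?_⟩⟩
  · have hz : ∑ i, a i * (Real.exp (t i) - 1 - t i) = 0 := by rw [hsplit, h1]; ring
    have hall := (Finset.sum_eq_zero_iff_of_nonneg key).mp hz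
    intro i hai
    by_contra hti
    have h2 := hall i (Finset.mem_univ i)
    have h3 := Real.add_one_lt_exp hti
    have hpos : 0 < a i * (Real.exp (t i) - 1 - t i) :=
      mul_pos (lt_of_le_of_ne (ha i) (Ne.symm hai)) (by linarith)
    rw [h2] at hpos; exact lt_irrefl 0 hpos
  · have hz : ∑ i, a i * (Real.exp (t i) - 1 - t i) = 0 := by
      apply Finset.sum_eq_zero
      intro i _
      by_cases hai : a i = 0
      · simp [hai]
      · rw [h i hai]; simp
    rw [hsplit] at hz; linarith

lemma qcf_braket_diag {d : ℕ} (U : Matrix (Fin d) (Fin d) ℂ) (g : Fin d → ℂ) (v : Fin d → ℂ) :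
    dotProduct (star v) ((U * Matrix.diagonal g * star U) *ᵥ v)
      = ∑ i, g i * Complex.normSq ((star U *ᵥ v) i) := by
  set x := star U *ᵥ v with hx
  have h1 : star v ᵥ* U = star x := by
    rw [hx, star_mulVec, show (star U)ᴴ = U from star_star U]
  rw [← Matrix.mulVec_mulVec, ← Matrix.mulVec_mulVec, dotProduct_mulVec, h1]
  simp only [dotProduct, Matrix.mulVec_diagonal, Pi.star_apply]
  refine Finset.sum_congr rfl fun i _ => ?_
  rw [show (star (x i) : ℂ) = (starRingEnd ℂ) (x i) from rfl]
  rw [show ((Complex.normSq (x i) : ℝ) : ℂ) = (starRingEnd ℂ) (x i) * x i from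
    (Complex.normSq_eq_conj_mul_self).symm ▸ rfl]
  ring

lemma qcf_eigen_iff {d : ℕ} (H : Matrix (Fin d) (Fin d) ℂ) (hH : H.IsHermitian)
    (v : Fin d → ℂ) (c : ℝ) :
    H *ᵥ v = (c : ℂ) • v ↔
      ∀ i, ((star (hH.eigenvectorUnitary : Matrix (Fin d) (Fin d) ℂ)) *ᵥ v) i ≠ 0 →
        hH.eigenvalues i = c := by
  set U : Matrix (Fin d) (Fin d) ℂ := (hH.eigenvectorUnitary : Matrix (Fin d) (Fin d) ℂ) with hUdef
  set x := star U *ᵥ v with hx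
  have hUU : U * star U = 1 := Matrix.mem_unitaryGroup_iff.mp hH.eigenvectorUnitary.2
  have hU'U : star U * U = 1 := Matrix.mem_unitaryGroup_iff'.mp hH.eigenvectorUnitary.2
  have key : H *ᵥ v = U *ᵥ ((Matrix.diagonal (RCLike.ofReal ∘ hH.eigenvalues)) *ᵥ x) := by
    conv_lhs => rw [hH.spectral_theorem, Unitary.conjStarAlgAut_apply]
    rw [← Matrix.mulVec_mulVec, ← Matrix.mulVec_mulVec]
  have hUx : U *ᵥ x = v := by
    rw [hx, Matrix.mulVec_mulVec, hUU, Matrix.one_mulVec]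
  constructor
  · intro h i hxi
    have h2 : (Matrix.diagonal (RCLike.ofReal ∘ hH.eigenvalues)) *ᵥ x = (c : ℂ) • x := by
      have h3 : star U *ᵥ (U *ᵥ ((Matrix.diagonal (RCLike.ofReal ∘ hH.eigenvalues)) *ᵥ x))
          = star U *ᵥ ((c : ℂ) • v) := by rw [← key, h]
      rwa [Matrix.mulVec_mulVec, hU'U, Matrix.one_mulVec, Matrix.mulVec_smul, ← hx] at h3
    have h4 := congrFun h2 i
    rw [Matrix.mulVec_diagonal] at h4
    have h5 : ((hH.eigenvalues i : ℂ)) * x i = (c : ℂ) * x i := h4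
    have h6 : ((hH.eigenvalues i : ℂ)) = (c : ℂ) := mul_right_cancel₀ hxi h5
    exact_mod_cast h6
  · intro h
    have h2 : (Matrix.diagonal (RCLike.ofReal ∘ hH.eigenvalues)) *ᵥ x = (c : ℂ) • x := by
      funext i
      rw [Matrix.mulVec_diagonal]
      by_cases hxi : x i = 0
      · simp [hxi]
      · have := h i hxi
        simp [Function.comp, this]
    rw [key, h2, Matrix.mulVec_smul, hUx]

/-- the quantum correction factor
Υ = e^{βΔE} ⟨ψ|e^{βH}|ψ⟩ ⟨φ'|e^{−βH}|φ'⟩ satisfies Υ ≥ 1, with equality iff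
both ψ and φ' are eigenvectors of H. -/
theorem quantum_correction_factor_ge_one
    {d : ℕ} (H : Matrix (Fin d) (Fin d) ℂ) (hH : H.IsHermitian)
    (β : ℝ) (hβ : 0 < β)
    (ψ φ : Fin d → ℂ) (hψ : dotProduct (star ψ) ψ = 1)
    (hφ : dotProduct (star φ) φ = 1) :
    ∀ ΔE : ℝ, ΔE = (braket φ H φ).re - (braket ψ H ψ).re →
    ∀ Υ : ℂ, Υ = Complex.exp (β * ΔE) * braket ψ (mfun (fun r => Real.exp (β * r)) H) ψ *
        braket φ (mfun (fun r => Real.exp (-β * r)) H) φ →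
      (Υ.im = 0 ∧ 1 ≤ Υ.re) ∧
      (Υ = 1 ↔ ((∃ c : ℝ, H.mulVec ψ = (c : ℂ) • ψ) ∧ (∃ c : ℝ, H.mulVec φ = (c : ℂ) • φ))) := by
  intro ΔE hΔE Υ hΥ
  set U : Matrix (Fin d) (Fin d) ℂ := (hH.eigenvectorUnitary : Matrix (Fin d) (Fin d) ℂ) with hUdef
  set ev := hH.eigenvalues with hev
  set x := star U *ᵥ ψ with hx
  set y := star U *ᵥ φ with hy
  set a : Fin d → ℝ := fun i => Complex.normSq (x i) with ha
  set b : Fin d → ℝ := fun i => Complex.normSq (y i) with hb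
  have hUU : U * star U = 1 := Matrix.mem_unitaryGroup_iff.mp hH.eigenvectorUnitary.2
  have hanonneg : ∀ i, 0 ≤ a i := fun i => Complex.normSq_nonneg _
  have hbnonneg : ∀ i, 0 ≤ b i := fun i => Complex.normSq_nonneg _
  -- sums of weights are 1
  have hsum_gen : ∀ v : Fin d → ℂ, dotProduct (star v) v = 1 →
      ∑ i, Complex.normSq ((star U *ᵥ v) i) = 1 := by
    intro v hv
    have h1 := qcf_braket_diag U (fun _ => (1:ℂ)) v
    rw [Matrix.diagonal_one, mul_one, hUU, Matrix.one_mulVec, hv] at h1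
    simp only [one_mul] at h1
    exact_mod_cast h1.symm
  have hsuma : ∑ i, a i = 1 := hsum_gen ψ hψ
  have hsumb : ∑ i, b i = 1 := hsum_gen φ hφ
  -- braket with H
  have hbH : ∀ v : Fin d → ℂ, braket v H v
      = ∑ i, (ev i : ℂ) * Complex.normSq ((star U *ᵥ v) i) := by
    intro v
    rw [braket]
    conv_lhs => rw [hH.spectral_theorem, Unitary.conjStarAlgAut_apply]
    exact qcf_braket_diag U _ v
  set Eψ := ∑ i, ev i * a i with hEψ
  set Eφ := ∑ i, ev i * b i with hEφ
  have hreψ : (braket ψ H ψ).re = Eψ := by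
    rw [hbH ψ, hEψ]
    rw [show (∑ i, (ev i : ℂ) * Complex.normSq (x i)) = ((∑ i, ev i * a i : ℝ) : ℂ) by
      push_cast; rfl]
    exact Complex.ofReal_re _
  have hreφ : (braket φ H φ).re = Eφ := by
    rw [hbH φ, hEφ]
    rw [show (∑ i, (ev i : ℂ) * Complex.normSq (y i)) = ((∑ i, ev i * b i : ℝ) : ℂ) by
      push_cast; rfl]
    exact Complex.ofReal_re _
  -- braket with mfun
  have hbk : ∀ (f : ℝ → ℂ) (v : Fin d → ℂ), braket v (mfun f H) v
      = ∑ i, f (ev i) * Complex.normSq ((star U *ᵥ v) i) := by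
    intro f v
    rw [braket, mfun, dif_pos hH]
    exact qcf_braket_diag U _ v
  set A := ∑ i, a i * Real.exp (β * ev i) with hA
  set B := ∑ i, b i * Real.exp (-β * ev i) with hB
  have hbkA : braket ψ (mfun (fun r => Real.exp (β * r)) H) ψ = (A : ℂ) := by
    rw [hbk, hA]; push_cast; exact Finset.sum_congr rfl fun i _ => by ring
  have hbkB : braket φ (mfun (fun r => Real.exp (-β * r)) H) φ = (B : ℂ) := by
    rw [hbk, hB]; push_cast; exact Finset.sum_congr rfl fun i _ => by ring
  -- the two Jensen sums
  set Sψ := ∑ i, a i * Real.exp (β * (ev i - Eψ)) with hSψ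
  set Sφ := ∑ i, b i * Real.exp (-β * (ev i - Eφ)) with hSφ
  have hSψA : Sψ = A * Real.exp (-(β * Eψ)) := by
    rw [hSψ, hA, Finset.sum_mul]
    refine Finset.sum_congr rfl fun i _ => ?_
    rw [show β * (ev i - Eψ) = β * ev i + -(β * Eψ) by ring, Real.exp_add]
    ring
  have hSφB : Sφ = B * Real.exp (β * Eφ) := by
    rw [hSφ, hB, Finset.sum_mul]
    refine Finset.sum_congr rfl fun i _ => ?_
    rw [show -β * (ev i - Eφ) = -β * ev i + β * Eφ by ring, Real.exp_add]
    ring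
  have hΥval : Υ = ((Sψ * Sφ : ℝ) : ℂ) := by
    rw [hΥ, hbkA, hbkB, hSψA, hSφB, hΔE, hreψ, hreφ]
    rw [show ((β : ℂ) * ((Eφ - Eψ : ℝ) : ℂ)) = (((β * (Eφ - Eψ) : ℝ)) : ℂ) by push_cast; ring,
      ← Complex.ofReal_exp]
    rw [show β * (Eφ - Eψ) = β * Eφ + -(β * Eψ) by ring, Real.exp_add]
    push_cast
    ring
  -- Jensen inequalities
  have hmeanψ : ∑ i, a i * (β * (ev i - Eψ)) = 0 := by
    have h : ∀ i, a i * (β * (ev i - Eψ)) = β * (ev i * a i) - (β * Eψ) * a i := fun i => by ring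
    simp_rw [h, Finset.sum_sub_distrib, ← Finset.mul_sum]
    rw [← hEψ, hsuma]
    ring
  have hmeanφ : ∑ i, b i * (-β * (ev i - Eφ)) = 0 := by
    have h : ∀ i, b i * (-β * (ev i - Eφ)) = (β * Eφ) * b i - β * (ev i * b i) := fun i => by ring
    simp_rw [h, Finset.sum_sub_distrib, ← Finset.mul_sum]
    rw [← hEφ, hsumb]
    ring
  obtain ⟨hJψ1, hJψ2⟩ := qcf_jensen a (fun i => β * (ev i - Eψ)) hanonneg hsuma hmeanψ
  obtain ⟨hJφ1, hJφ2⟩ := qcf_jensen b (fun i => -β * (ev i - Eφ)) hbnonneg hsumb hmeanφ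
  rw [← hSψ] at hJψ1 hJψ2
  rw [← hSφ] at hJφ1 hJφ2
  have hprod1 : 1 ≤ Sψ * Sφ := by nlinarith
  constructor
  · constructor
    · rw [hΥval]; exact Complex.ofReal_im _
    · rw [hΥval, Complex.ofReal_re]; exact hprod1
  · -- equality case
    rw [hΥval]
    rw [show ((1:ℂ)) = ((1:ℝ) : ℂ) by norm_num, Complex.ofReal_inj]
    have hβne : β ≠ 0 := ne_of_gt hβ
    have hane : ∀ i, a i ≠ 0 ↔ x i ≠ 0 := fun i =>
      not_iff_not.mpr Complex.normSq_eq_zero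
    have hbne : ∀ i, b i ≠ 0 ↔ y i ≠ 0 := fun i =>
      not_iff_not.mpr Complex.normSq_eq_zero
    constructor
    · intro h1
      have hSψ1 : Sψ = 1 := by nlinarith
      have hSφ1 : Sφ = 1 := by nlinarith
      refine ⟨⟨Eψ, ?_⟩, ⟨Eφ, ?_⟩⟩
      · rw [show H.mulVec ψ = H *ᵥ ψ from rfl, qcf_eigen_iff H hH ψ Eψ]
        intro i hxi
        have := hJψ2.mp hSψ1 i ((hane i).mpr hxi)
        have h2 : ev i - Eψ = 0 := by
          rcases mul_eq_zero.mp this with h | h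
          · exact absurd h hβne
          · exact h
        linarith
      · rw [show H.mulVec φ = H *ᵥ φ from rfl, qcf_eigen_iff H hH φ Eφ]
        intro i hyi
        have := hJφ2.mp hSφ1 i ((hbne i).mpr hyi)
        have h2 : ev i - Eφ = 0 := by
          rcases mul_eq_zero.mp this with h | h
          · exact absurd h (neg_ne_zero.mpr hβne)
          · exact h
        linarith
    · rintro ⟨⟨c, hc⟩, ⟨c', hc'⟩⟩
      have hcψ := (qcf_eigen_iff H hH ψ c).mp hc
      have hcφ := (qcf_eigen_iff H hH φ c').mp hc'
      simp only [← hev, ← hUdef] at hcψ hcφ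
      have hEψc : Eψ = c := by
        rw [hEψ]
        rw [show (∑ i, ev i * a i) = ∑ i, c * a i from Finset.sum_congr rfl fun i _ => by
          by_cases hai : a i = 0
          · rw [hai]; ring
          · rw [hcψ i ((hane i).mp hai)]]
        rw [← Finset.mul_sum, hsuma, mul_one]
      have hEφc : Eφ = c' := by
        rw [hEφ]
        rw [show (∑ i, ev i * b i) = ∑ i, c' * b i from Finset.sum_congr rfl fun i _ => by
          by_cases hbi : b i = 0
          · rw [hbi]; ring
          · rw [hcφ i ((hbne i).mp hbi)]]
        rw [← Finset.mul_sum, hsumb, mul_one]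
      have hSψ1 : Sψ = 1 := by
        apply hJψ2.mpr
        intro i hai
        rw [hcψ i ((hane i).mp hai), ← hEψc]
        ring
      have hSφ1 : Sφ = 1 := by
        apply hJφ2.mpr
        intro i hbi
        rw [hcφ i ((hbne i).mp hbi), ← hEφc]
        ring
      rw [hSψ1, hSφ1, mul_one]
end

section
/- Let N be a quantum channel on d×d complex matrices, γ a positive-definite density matrix with N(γ) positive definite, and ρ a density matrix. Fix orthonormal eigenbases γ = ∑_i r_i |i⟩⟨i|, N(γ) = ∑_{k'} r'_{k'} |k'⟩⟨k'|, ρ = ∑_μ p_μ |ψ_μ⟩⟨ψ_μ|, N(ρ) = ∑_ν p'_ν |φ'_ν⟩⟨φ'_ν|, and define the two-point-measurement quasi-probability P^{μ,ν}_{ij,k'l'} = p_μ ⟨φ'_ν| Π_{k'} N(Π_i |ψ_μ⟩⟨ψ_μ| Π_j) Π_{l'} |φ'_ν⟩ with Π_i = |i⟩⟨i|, Π_{k'} = |k'⟩⟨k'|. Then all four marginality relations hold: (1) ∑_{ν,i,j,k',l'} P^{μ,ν}_{ij,k'l'} = p_μ for each μ; (2) ∑_{μ,i,j,k',l'} P^{μ,ν}_{ij,k'l'}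 = p'_ν for each ν; (3) ∑_{μ,ν,j,k',l'} P^{μ,ν}_{ij,k'l'} = ⟨i|ρ|i⟩ for each i; (4) ∑_{μ,ν,i,j,l'} P^{μ,ν}_{ij,k'l'} = ⟨k'|N(ρ)|k'⟩ for each k'. -/
open Matrix
open scoped ComplexOrder

/-- An orthonormal family of vectors in ℂ^d. -/
def IsONB {d : ℕ} (e : Fin d → Fin d → ℂ) : Prop :=
  ∀ i j, dotProduct (star (e i)) (e j) = if i = j then 1 else 0

/-- For A = ∑ i, r i • |e i⟩⟨e i| with `e` orthonormal and `r` positive, the complex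
matrix power A^z = exp (z log A) is given by A^z = ∑ i, (r i)^z • |e i⟩⟨e i|. -/
noncomputable def projPow {d : ℕ} (r : Fin d → ℝ) (e : Fin d → Fin d → ℂ) (z : ℂ) :
    Matrix (Fin d) (Fin d) ℂ :=
  ∑ i, ((r i : ℂ) ^ z) • ketbra (e i) (e i)

/-- The two-point-measurement quasi-probability
P^{μ,ν}_{ij,k'l'} = p_μ ⟨φ'_ν| Π_{k'} N(Π_i |ψ_μ⟩⟨ψ_μ| Π_j) Π_{l'} |φ'_ν⟩. -/
noncomputable def tpmP {d : ℕ} {ι : Type} [Fintype ι] (K : ι → Matrix (Fin d) (Fin d) ℂ)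
    (p : Fin d → ℝ) (ψ : Fin d → Fin d → ℂ) (φ : Fin d → Fin d → ℂ)
    (e : Fin d → Fin d → ℂ) (f : Fin d → Fin d → ℂ)
    (μ ν i j k l : Fin d) : ℂ :=
  (p μ : ℂ) *
    braket (φ ν)
      (ketbra (f k) (f k) *
        krausMap K (ketbra (e i) (e i) * ketbra (ψ μ) (ψ μ) * ketbra (e j) (e j)) *
        ketbra (f l) (f l))
      (φ ν)


section Helpers
variable {d : ℕ} {ι : Type} [Fintype ι]

lemma braket_add (v w : Fin d → ℂ) (A B : Matrix (Fin d) (Fin d) ℂ) :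
    braket v (A + B) w = braket v A w + braket v B w := by
  simp [braket, Matrix.add_mulVec, dotProduct_add]

lemma braket_zero (v w : Fin d → ℂ) : braket v (0 : Matrix (Fin d) (Fin d) ℂ) w = 0 := by
  simp [braket]

lemma braket_sum {α : Type*} (s : Finset α) (v w : Fin d → ℂ)
    (A : α → Matrix (Fin d) (Fin d) ℂ) :
    braket v (∑ x ∈ s, A x) w = ∑ x ∈ s, braket v (A x) w := by
  classical
  induction s using Finset.induction with
  | empty => simp [braket_zero]
  | insert a s h ih => simp [Finset.sum_insert h, braket_add, ih]

lemma braket_smul (c : ℂ) (v w : Fin d → ℂ) (A : Matrix (Fin d) (Fin d) ℂ) :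
    braket v (c • A) w = c * braket v A w := by
  simp [braket, Matrix.smul_mulVec, dotProduct_smul, smul_eq_mul]

lemma sum_ketbra {g : Fin d → Fin d → ℂ} (hg : IsONB g) :
    ∑ x, ketbra (g x) (g x) = 1 := by
  have h1 : (Matrix.of (fun a x => g x a))ᴴ * (Matrix.of (fun a x => g x a)) = 1 := by
    ext x y
    simpa [Matrix.mul_apply, Matrix.conjTranspose_apply, dotProduct,
      Matrix.one_apply] using hg x y
  have h2 := mul_eq_one_comm.mp h1
  ext a b
  have := congrFun (congrFun h2 a) b
  simpa [Matrix.mul_apply, Matrix.conjTranspose_apply, ketbra, Matrix.vecMulVec_apply,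
    Matrix.sum_apply, mul_comm] using this

lemma krausMap_sum {α : Type*} (K : ι → Matrix (Fin d) (Fin d) ℂ) (s : Finset α)
    (X : α → Matrix (Fin d) (Fin d) ℂ) :
    krausMap K (∑ x ∈ s, X x) = ∑ x ∈ s, krausMap K (X x) := by
  simp only [krausMap, Finset.mul_sum, Finset.sum_mul]
  exact Finset.sum_comm

lemma krausMap_smul (K : ι → Matrix (Fin d) (Fin d) ℂ) (c : ℂ)
    (X : Matrix (Fin d) (Fin d) ℂ) :
    krausMap K (c • X) = c • krausMap K X := by
  simp [krausMap, Finset.smul_sum, Matrix.mul_smul, Matrix.smul_mul]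

lemma braket_eq_trace (v w : Fin d → ℂ) (A : Matrix (Fin d) (Fin d) ℂ) :
    braket v A w = (A * ketbra w v).trace := by
  simp only [braket, Matrix.trace, Matrix.diag_apply, Matrix.mul_apply, ketbra,
    Matrix.vecMulVec_apply, dotProduct, Matrix.mulVec, Pi.star_apply,
    Finset.mul_sum]
  exact Finset.sum_congr rfl fun a _ => Finset.sum_congr rfl fun b _ => by ring

lemma trace_ketbra (v w : Fin d → ℂ) :
    (ketbra v w).trace = dotProduct (star w) v := by
  simp [ketbra, Matrix.trace, Matrix.vecMulVec_apply, dotProduct, mul_comm]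

lemma trace_krausMap (K : ι → Matrix (Fin d) (Fin d) ℂ)
    (hK : ∑ m, (K m)ᴴ * K m = 1) (X : Matrix (Fin d) (Fin d) ℂ) :
    (krausMap K X).trace = X.trace := by
  have h : ∀ m : ι, (K m * X * (K m)ᴴ).trace = ((K m)ᴴ * K m * X).trace := by
    intro m
    rw [Matrix.trace_mul_cycle, Matrix.mul_assoc]
  calc (krausMap K X).trace = ∑ m, (K m * X * (K m)ᴴ).trace := by
        simp [krausMap]
    _ = ∑ m, ((K m)ᴴ * K m * X).trace := Finset.sum_congr rfl fun m _ => h m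
    _ = ((∑ m, (K m)ᴴ * K m) * X).trace := by
        rw [Finset.sum_mul, Matrix.trace_sum]
    _ = X.trace := by rw [hK, Matrix.one_mul]

lemma sum_braket_diag {g : Fin d → Fin d → ℂ} (hg : IsONB g)
    (A : Matrix (Fin d) (Fin d) ℂ) :
    ∑ x, braket (g x) A (g x) = A.trace := by
  simp only [braket_eq_trace, ← Matrix.trace_sum, ← Finset.mul_sum, sum_ketbra hg,
    Matrix.mul_one]

lemma braket_ketbra (v a b w : Fin d → ℂ) :
    braket v (ketbra a b) w =
      dotProduct (star v) a * dotProduct (star b) w := by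
  have hrhs : dotProduct (star v) a * dotProduct (star b) w
      = ∑ x, ∑ y, star (v x) * a x * (star (b y) * w y) := by
    rw [dotProduct, dotProduct, Finset.sum_mul_sum]
    simp [Pi.star_apply]
  rw [hrhs]
  simp only [braket, ketbra, Matrix.mulVec, Matrix.vecMulVec_apply, dotProduct,
    Pi.star_apply, Finset.mul_sum]
  exact Finset.sum_congr rfl fun x _ => Finset.sum_congr rfl fun y _ => by ring

end Helpers

section Collapse
variable {d : ℕ} {ι : Type} [Fintype ι]
variable (K : ι → Matrix (Fin d) (Fin d) ℂ) (p : Fin d → ℝ)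
variable (ψ φ e f : Fin d → Fin d → ℂ)

lemma collapse_jkl (he : IsONB e) (hf : IsONB f) (μ ν i : Fin d) :
    ∑ j, ∑ k, ∑ l, tpmP K p ψ φ e f μ ν i j k l
      = (p μ : ℂ) * braket (φ ν)
          (krausMap K (ketbra (e i) (e i) * ketbra (ψ μ) (ψ μ))) (φ ν) := by
  have h1 : ∀ A : Matrix (Fin d) (Fin d) ℂ, ∑ l, A * ketbra (f l) (f l) = A := fun A => by
    rw [← Finset.mul_sum, sum_ketbra hf, Matrix.mul_one]
  have h2 : ∀ A : Matrix (Fin d) (Fin d) ℂ, ∑ k, ketbra (f k) (f k) * A = A := fun A => by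
    rw [← Finset.sum_mul, sum_ketbra hf, Matrix.one_mul]
  simp only [tpmP, ← Finset.mul_sum]
  congr 1
  simp only [← braket_sum]
  congr 1
  simp only [h1, h2]
  rw [← krausMap_sum]
  congr 1
  rw [← Finset.mul_sum, sum_ketbra he, Matrix.mul_one]

lemma collapse_ijkl (he : IsONB e) (hf : IsONB f) (μ ν : Fin d) :
    ∑ i, ∑ j, ∑ k, ∑ l, tpmP K p ψ φ e f μ ν i j k l
      = (p μ : ℂ) * braket (φ ν) (krausMap K (ketbra (ψ μ) (ψ μ))) (φ ν) := by
  simp only [collapse_jkl K p ψ φ e f he hf μ ν, ← Finset.mul_sum]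
  congr 1
  simp only [← braket_sum]
  congr 1
  rw [← krausMap_sum]
  congr 1
  rw [← Finset.sum_mul, sum_ketbra he, Matrix.one_mul]

lemma collapse_ijl (he : IsONB e) (hf : IsONB f) (μ ν k : Fin d) :
    ∑ i, ∑ j, ∑ l, tpmP K p ψ φ e f μ ν i j k l
      = (p μ : ℂ) * braket (φ ν)
          (ketbra (f k) (f k) * krausMap K (ketbra (ψ μ) (ψ μ))) (φ ν) := by
  have h1 : ∀ A : Matrix (Fin d) (Fin d) ℂ, ∑ l, A * ketbra (f l) (f l) = A := fun A => by
    rw [← Finset.mul_sum, sum_ketbra hf, Matrix.mul_one]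
  simp only [tpmP, ← Finset.mul_sum]
  congr 1
  simp only [← braket_sum]
  congr 1
  simp only [h1]
  simp only [← Finset.mul_sum]
  congr 1
  simp only [← krausMap_sum]
  congr 1
  simp only [← Finset.mul_sum]
  simp only [sum_ketbra he, Matrix.mul_one]
  rw [← Finset.sum_mul, sum_ketbra he, Matrix.one_mul]

end Collapse
/-- the four marginality relations of the TPM quasi-probability. -/
theorem tpm_quasiprobability_marginals
    {d : ℕ} {ι : Type} [Fintype ι] (K : ι → Matrix (Fin d) (Fin d) ℂ)
    (hK : ∑ m, (K m)ᴴ * K m = 1)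
    (r : Fin d → ℝ) (e : Fin d → Fin d → ℂ) (hr : ∀ i, 0 < r i) (he : IsONB e)
    (hrtr : ∑ i, r i = 1)
    (r' : Fin d → ℝ) (f : Fin d → Fin d → ℂ) (hr' : ∀ k, 0 < r' k) (hf : IsONB f)
    (hNγ : krausMap K (∑ i, ((r i : ℂ)) • ketbra (e i) (e i)) =
      ∑ k, ((r' k : ℂ)) • ketbra (f k) (f k))
    (ρ : Matrix (Fin d) (Fin d) ℂ)
    (p : Fin d → ℝ) (ψ : Fin d → Fin d → ℂ) (hp : ∀ μ, 0 ≤ p μ) (hψ : IsONB ψ)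
    (hρ : ρ = ∑ μ, ((p μ : ℂ)) • ketbra (ψ μ) (ψ μ))
    (p' : Fin d → ℝ) (φ : Fin d → Fin d → ℂ) (hp' : ∀ ν, 0 ≤ p' ν) (hφ : IsONB φ)
    (hNρ : krausMap K ρ = ∑ ν, ((p' ν : ℂ)) • ketbra (φ ν) (φ ν)) :
    (∀ μ, ∑ ν, ∑ i, ∑ j, ∑ k, ∑ l, tpmP K p ψ φ e f μ ν i j k l = (p μ : ℂ)) ∧
    (∀ ν, ∑ μ, ∑ i, ∑ j, ∑ k, ∑ l, tpmP K p ψ φ e f μ ν i j k l = (p' ν : ℂ)) ∧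
    (∀ i, ∑ μ, ∑ ν, ∑ j, ∑ k, ∑ l, tpmP K p ψ φ e f μ ν i j k l = braket (e i) ρ (e i)) ∧
    (∀ k, ∑ μ, ∑ ν, ∑ i, ∑ j, ∑ l, tpmP K p ψ φ e f μ ν i j k l =
      braket (f k) (krausMap K ρ) (f k)) := by

  refine ⟨?_, ?_, ?_, ?_⟩
  · -- marginal 1
    intro μ
    have hcol := collapse_ijkl K p ψ φ e f he hf μ
    calc ∑ ν, ∑ i, ∑ j, ∑ k, ∑ l, tpmP K p ψ φ e f μ ν i j k l
        = ∑ ν, (p μ : ℂ) * braket (φ ν) (krausMap K (ketbra (ψ μ) (ψ μ))) (φ ν) :=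
          Finset.sum_congr rfl fun ν _ => hcol ν
      _ = (p μ : ℂ) * (krausMap K (ketbra (ψ μ) (ψ μ))).trace := by
          rw [← Finset.mul_sum, sum_braket_diag hφ]
      _ = (p μ : ℂ) * (ketbra (ψ μ) (ψ μ)).trace := by rw [trace_krausMap K hK]
      _ = (p μ : ℂ) := by rw [trace_ketbra, hψ μ μ, if_pos rfl, mul_one]
  · -- marginal 2
    intro ν
    have hcol := collapse_ijkl K p ψ φ e f he hf
    calc ∑ μ, ∑ i, ∑ j, ∑ k, ∑ l, tpmP K p ψ φ e f μ ν i j k l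
        = ∑ μ, (p μ : ℂ) * braket (φ ν) (krausMap K (ketbra (ψ μ) (ψ μ))) (φ ν) :=
          Finset.sum_congr rfl fun μ _ => hcol μ ν
      _ = braket (φ ν) (krausMap K ρ) (φ ν) := by
          rw [hρ, krausMap_sum, braket_sum]
          exact Finset.sum_congr rfl fun μ _ => by
            rw [krausMap_smul, braket_smul]
      _ = (p' ν : ℂ) := by
          rw [hNρ, braket_sum]
          have : ∀ κ, braket (φ ν) ((p' κ : ℂ) • ketbra (φ κ) (φ κ)) (φ ν)
              = if κ = ν then (p' κ : ℂ) else 0 := by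
            intro κ
            rw [braket_smul, braket_ketbra, hφ ν κ, hφ κ ν]
            by_cases h : κ = ν <;> simp [h]
          rw [Finset.sum_congr rfl fun κ _ => this κ]
          simp
  · -- marginal 3
    intro i
    have hcol := collapse_jkl K p ψ φ e f he hf
    calc ∑ μ, ∑ ν, ∑ j, ∑ k, ∑ l, tpmP K p ψ φ e f μ ν i j k l
        = ∑ μ, ∑ ν, (p μ : ℂ) * braket (φ ν)
            (krausMap K (ketbra (e i) (e i) * ketbra (ψ μ) (ψ μ))) (φ ν) :=
          Finset.sum_congr rfl fun μ _ => Finset.sum_congr rfl fun ν _ => hcol μ ν i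
      _ = ∑ μ, (p μ : ℂ) * (ketbra (e i) (e i) * ketbra (ψ μ) (ψ μ)).trace := by
          refine Finset.sum_congr rfl fun μ _ => ?_
          rw [← Finset.mul_sum, sum_braket_diag hφ, trace_krausMap K hK]
      _ = (ketbra (e i) (e i) * ρ).trace := by
          rw [hρ, Finset.mul_sum, Matrix.trace_sum]
          refine Finset.sum_congr rfl fun μ _ => ?_
          rw [Matrix.mul_smul, Matrix.trace_smul, smul_eq_mul]
      _ = braket (e i) ρ (e i) := by
          rw [braket_eq_trace, Matrix.trace_mul_comm]
  · -- marginal 4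
    intro k
    have hcol := collapse_ijl K p ψ φ e f he hf
    calc ∑ μ, ∑ ν, ∑ i, ∑ j, ∑ l, tpmP K p ψ φ e f μ ν i j k l
        = ∑ μ, ∑ ν, (p μ : ℂ) * braket (φ ν)
            (ketbra (f k) (f k) * krausMap K (ketbra (ψ μ) (ψ μ))) (φ ν) :=
          Finset.sum_congr rfl fun μ _ => Finset.sum_congr rfl fun ν _ => hcol μ ν k
      _ = ∑ μ, (p μ : ℂ) * (ketbra (f k) (f k) * krausMap K (ketbra (ψ μ) (ψ μ))).trace := by
          refine Finset.sum_congr rfl fun μ _ => ?_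
          rw [← Finset.mul_sum, sum_braket_diag hφ]
      _ = (ketbra (f k) (f k) * krausMap K ρ).trace := by
          rw [hρ, krausMap_sum, Finset.mul_sum, Matrix.trace_sum]
          refine Finset.sum_congr rfl fun μ _ => ?_
          rw [krausMap_smul, Matrix.mul_smul, Matrix.trace_smul, smul_eq_mul]
      _ = braket (f k) (krausMap K ρ) (f k) := by
          rw [braket_eq_trace, Matrix.trace_mul_comm]
end

section
/- Let N be a quantum channel on d×d complex matrices, γ a positive-definite density matrix with N(γ) positive definite, and ρ a density matrix, with eigenbases and two-point-measurement quasi-probability P^{μ,ν}_{ij,k'l'} = p_μ ⟨φ'_ν| Π_{k'} N(Π_i |ψ_μ⟩⟨ψ_μ| Π_j) Π_{l'} |φ'_ν⟩ as above. Then for all indices, P^{μ,ν}_{ij,k'l'} = conj(P^{μ,ν}_{ji,l'k'}). Consequently, for every real number s, the sum of P^{μ,ν}_{ij,k'l'} over all tuples (μ,i,j,ν,k',l') whose real entropy production (log p_μ − log p'_ν) − (1/2)log(r_i r_j/(r'_{k'} r'_{l'})) equals s, is a real number. -/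
open Matrix
open scoped ComplexOrder

lemma ketbra_ct {d : ℕ} (v w : Fin d → ℂ) : (ketbra v w)ᴴ = ketbra w v := by
  ext i j
  simp [ketbra, Matrix.vecMulVec_apply, Matrix.conjTranspose_apply, mul_comm]

lemma krausMap_ct {d : ℕ} {ι : Type} [Fintype ι] (K : ι → Matrix (Fin d) (Fin d) ℂ)
    (X : Matrix (Fin d) (Fin d) ℂ) : (krausMap K X)ᴴ = krausMap K Xᴴ := by
  unfold krausMap
  rw [Matrix.conjTranspose_sum]
  refine Finset.sum_congr rfl fun m _ => ?_
  simp [Matrix.conjTranspose_mul, Matrix.mul_assoc]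

lemma braket_conj {d : ℕ} (v : Fin d → ℂ) (A : Matrix (Fin d) (Fin d) ℂ) (w : Fin d → ℂ) :
    (starRingEnd ℂ) (braket v A w) = braket w Aᴴ v := by
  unfold braket
  simp only [dotProduct, Matrix.mulVec, dotProduct, Pi.star_apply,
    Matrix.conjTranspose_apply, map_sum, _root_.map_mul, Finset.mul_sum]
  rw [Finset.sum_comm]
  refine Finset.sum_congr rfl fun i _ => Finset.sum_congr rfl fun j _ => ?_
  simp [mul_comm, mul_left_comm]

/-- P^{μ,ν}_{ij,k'l'} = conj(P^{μ,ν}_{ji,l'k'}); consequently, for each real s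
the sum of the quasi-probability over tuples with real entropy production equal to s is real. -/
theorem tpm_quasiprobability_conjugation_symmetry
    {d : ℕ} {ι : Type} [Fintype ι] (K : ι → Matrix (Fin d) (Fin d) ℂ)
    (hK : ∑ m, (K m)ᴴ * K m = 1)
    (r : Fin d → ℝ) (e : Fin d → Fin d → ℂ) (hr : ∀ i, 0 < r i) (he : IsONB e)
    (hrtr : ∑ i, r i = 1)
    (r' : Fin d → ℝ) (f : Fin d → Fin d → ℂ) (hr' : ∀ k, 0 < r' k) (hf : IsONB f)
    (hNγ : krausMap K (∑ i, ((r i : ℂ)) • ketbra (e i) (e i)) =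
      ∑ k, ((r' k : ℂ)) • ketbra (f k) (f k))
    (ρ : Matrix (Fin d) (Fin d) ℂ)
    (p : Fin d → ℝ) (ψ : Fin d → Fin d → ℂ) (hp : ∀ μ, 0 ≤ p μ) (hψ : IsONB ψ)
    (hρ : ρ = ∑ μ, ((p μ : ℂ)) • ketbra (ψ μ) (ψ μ))
    (p' : Fin d → ℝ) (φ : Fin d → Fin d → ℂ) (hp' : ∀ ν, 0 ≤ p' ν) (hφ : IsONB φ)
    (hNρ : krausMap K ρ = ∑ ν, ((p' ν : ℂ)) • ketbra (φ ν) (φ ν)) :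
    (∀ μ ν i j k l,
      tpmP K p ψ φ e f μ ν i j k l = (starRingEnd ℂ) (tpmP K p ψ φ e f μ ν j i l k)) ∧
    ((∀ μ, 0 < p μ) → (∀ ν, 0 < p' ν) → ∀ s : ℝ,
      (∑ μ, ∑ ν, ∑ i, ∑ j, ∑ k, ∑ l,
        if (Real.log (p μ) - Real.log (p' ν)) -
            1/2 * Real.log (r i * r j / (r' k * r' l)) = s then
          tpmP K p ψ φ e f μ ν i j k l
        else 0).im = 0) := by
  have hsym : ∀ μ ν i j k l,
      tpmP K p ψ φ e f μ ν i j k l = (starRingEnd ℂ) (tpmP K p ψ φ e f μ ν j i l k) := by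
    intro μ ν i j k l
    unfold tpmP
    rw [_root_.map_mul, braket_conj, Complex.conj_ofReal]
    congr 2
    simp only [Matrix.conjTranspose_mul, krausMap_ct, ketbra_ct, Matrix.mul_assoc]
  refine ⟨hsym, fun hpp hpp' s => ?_⟩
  set F : Fin d → Fin d → Fin d → Fin d → Fin d → Fin d → ℂ := fun μ ν i j k l =>
    if (Real.log (p μ) - Real.log (p' ν)) -
        1/2 * Real.log (r i * r j / (r' k * r' l)) = s then
      tpmP K p ψ φ e f μ ν i j k l
    else 0 with hF
  have hFsym : ∀ μ ν i j k l, (F μ ν i j k l).im = -(F μ ν j i l k).im := by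
    intro μ ν i j k l
    have hcond : ((Real.log (p μ) - Real.log (p' ν)) -
        1/2 * Real.log (r i * r j / (r' k * r' l)) = s) ↔
        ((Real.log (p μ) - Real.log (p' ν)) -
        1/2 * Real.log (r j * r i / (r' l * r' k)) = s) := by
      rw [mul_comm (r i), mul_comm (r' k)]
    simp only [hF]
    by_cases h : (Real.log (p μ) - Real.log (p' ν)) -
        1/2 * Real.log (r i * r j / (r' k * r' l)) = s
    · rw [if_pos h, if_pos (hcond.mp h), hsym μ ν i j k l, Complex.conj_im]
    · rw [if_neg h, if_neg (fun h' => h (hcond.mpr h'))]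
      simp
  have him : (∑ μ, ∑ ν, ∑ i, ∑ j, ∑ k, ∑ l, F μ ν i j k l).im
      = ∑ μ, ∑ ν, ∑ i, ∑ j, ∑ k, ∑ l, (F μ ν i j k l).im := by
    simp [Complex.im_sum]
  rw [him]
  have hswap : (∑ μ, ∑ ν, ∑ i, ∑ j, ∑ k, ∑ l, (F μ ν i j k l).im)
      = ∑ μ, ∑ ν, ∑ i, ∑ j, ∑ k, ∑ l, (F μ ν j i l k).im := by
    refine Finset.sum_congr rfl fun μ _ => Finset.sum_congr rfl fun ν _ => ?_
    rw [Finset.sum_comm]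
    refine Finset.sum_congr rfl fun i _ => Finset.sum_congr rfl fun j _ => ?_
    exact Finset.sum_comm
  have hneg : (∑ μ, ∑ ν, ∑ i, ∑ j, ∑ k, ∑ l, (F μ ν i j k l).im)
      = -(∑ μ, ∑ ν, ∑ i, ∑ j, ∑ k, ∑ l, (F μ ν j i l k).im) := by
    simp only [← Finset.sum_neg_distrib]
    exact Finset.sum_congr rfl fun μ _ => Finset.sum_congr rfl fun ν _ =>
      Finset.sum_congr rfl fun i _ => Finset.sum_congr rfl fun j _ =>
      Finset.sum_congr rfl fun k _ => Finset.sum_congr rfl fun l _ => hFsym μ ν i j k l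
  have h1 := hswap.symm.trans hneg
  rw [hswap]
  linarith
end
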